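/- Let E(x,t) be the Stokes fundamental solution in ℝ³, whose (i,j) entry is E_{ij}(x,t) = (4πt)^{−3/2} e^{−|x|²/4t} δ_{ij} + ∫_t^∞ (4πs)^{−3/2} ∂_i∂_j(e^{−|x|²/4s}) ds. Then for every nonnegative integer j there exists a constant C_j > 0 such that |∇ʲ E(x,t)| ≤ C_j (|x|² + t)^{−(3+j)/2} for all x ∈ ℝ³ and t > 0. For concreteness, prove the case j = 0: |E(x,t)| ≤ C₀(|x|²+t)^{−3/2} for all x ∈ ℝ³, t > 0. -/

import Mathlib

open MeasureTheory

/-- The `(i,j)` entry of the Stokes fundamental solution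
`E(x,t) = (4πt)^{-3/2} e^{-|x|²/4t} 𝕀 + ∫_t^∞ (4πs)^{-3/2} ∇²(e^{-|x|²/4s}) ds`. -/
noncomputable def stokesFundamental (x : EuclideanSpace ℝ (Fin 3)) (t : ℝ)
    (i j : Fin 3) : ℝ :=
  (4 * Real.pi * t) ^ (-(3:ℝ)/2) * Real.exp (-‖x‖^2 / (4*t)) *
      (if i = j then (1:ℝ) else 0)
    + ∫ s in Set.Ioi t,
        (4 * Real.pi * s) ^ (-(3:ℝ)/2) *
          fderiv ℝ (fun y => fderiv ℝ
              (fun z : EuclideanSpace ℝ (Fin 3) => Real.exp (-‖z‖^2 / (4*s)))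
              y (EuclideanSpace.single j 1))
            x (EuclideanSpace.single i 1)

section Aux

open Set

local notation "E3" => EuclideanSpace ℝ (Fin 3)

private lemma gauss_fderiv (s : ℝ) (y : E3) :
    HasFDerivAt (fun z : E3 => Real.exp (-‖z‖^2/(4*s)))
      (Real.exp (-‖y‖^2/(4*s)) • ((-(4*s)⁻¹) • ((2:ℕ) • (innerSL ℝ y)))) y := by
  have h1 : HasFDerivAt (fun z : E3 => ‖z‖^2) ((2:ℕ) • (innerSL ℝ y)) y :=
    (hasStrictFDerivAt_norm_sq y).hasFDerivAt
  have h2 : HasFDerivAt (fun z : E3 => -‖z‖^2/(4*s))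
      ((-(4*s)⁻¹) • ((2:ℕ) • (innerSL ℝ y))) y := by
    have := (h1.const_mul (-(4*s)⁻¹))
    exact this.congr_of_eventuallyEq (Filter.Eventually.of_forall fun z => by ring)
  simpa using h2.exp

private lemma gauss_fderiv_apply (s : ℝ) (hs : s ≠ 0) (y : E3) (j : Fin 3) :
    fderiv ℝ (fun z : E3 => Real.exp (-‖z‖^2/(4*s))) y (EuclideanSpace.single j 1)
      = Real.exp (-‖y‖^2/(4*s)) * (y j * (-(2*s)⁻¹)) := by
  rw [(gauss_fderiv s y).fderiv]
  simp [EuclideanSpace.inner_single_right, real_inner_comm]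
  field_simp
  ring

private lemma gauss_second_deriv (s : ℝ) (hs : s ≠ 0) (x : E3) (i j : Fin 3) :
    fderiv ℝ (fun y : E3 => fderiv ℝ (fun z : E3 => Real.exp (-‖z‖^2/(4*s))) y
        (EuclideanSpace.single j 1)) x (EuclideanSpace.single i 1)
      = Real.exp (-‖x‖^2/(4*s)) *
          (x i * x j / (4*s^2) - (if i = j then (1:ℝ) else 0)/(2*s)) := by
  have hfg : (fun y : E3 => fderiv ℝ (fun z : E3 => Real.exp (-‖z‖^2/(4*s))) y
      (EuclideanSpace.single j 1))
      = fun y : E3 => Real.exp (-‖y‖^2/(4*s)) * (y j * (-(2*s)⁻¹)) := by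
    funext y; exact gauss_fderiv_apply s hs y j
  rw [hfg]
  have hw : HasFDerivAt (fun y : E3 => y j * (-(2*s)⁻¹))
      ((-(2*s)⁻¹) • (EuclideanSpace.proj j : E3 →L[ℝ] ℝ)) x := by
    simpa [mul_comm] using
      ((EuclideanSpace.proj j : E3 →L[ℝ] ℝ).hasFDerivAt (x := x)).const_mul (-(2*s)⁻¹)
  have hu := gauss_fderiv s x
  have hprod := hu.mul hw
  rw [show (fun y : E3 => Real.exp (-‖y‖^2/(4*s)) * (y j * (-(2*s)⁻¹)))
      = ((fun z : E3 => Real.exp (-‖z‖^2/(4*s))) * fun y : E3 => y j * (-(2*s)⁻¹)) from rfl,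
    hprod.fderiv]
  rcases eq_or_ne i j with h | h
  · subst h
    simp [EuclideanSpace.inner_single_right, real_inner_comm]
    field_simp
    ring
  · simp [EuclideanSpace.inner_single_right, real_inner_comm, h, Ne.symm h,
      EuclideanSpace.single_apply]
    field_simp

private lemma inv_le_mul_inv' {A B K : ℝ} (hA : 0 < A) (hB : 0 < B) (h : A ≤ K * B) :
    B⁻¹ ≤ K * A⁻¹ := by
  have hA' := inv_pos.2 hA
  have hB' := inv_pos.2 hB
  nlinarith [mul_inv_cancel₀ hA.ne', mul_inv_cancel₀ hB.ne',
    mul_nonneg (sub_nonneg.2 h) (le_of_lt (mul_pos hA' hB'))]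

private lemma core_bound (p r t : ℝ) (hp : 1 ≤ p) (ht : 0 < t) :
    t ^ (-p) * Real.exp (-(r^2)/(4*t)) ≤ (4*p) ^ p * (r^2+t) ^ (-p) := by
  have hp0 : 0 < p := lt_of_lt_of_le one_pos hp
  set u : ℝ := r^2/(4*p*t) with hu
  have hu0 : 0 ≤ u := by positivity
  have hexp : 1 + u ≤ Real.exp u := by simpa [add_comm] using Real.add_one_le_exp u
  have step1 : r^2 + t ≤ (4*p) * t * Real.exp u := by
    have h4 : 4*p*t*u = r^2 := by rw [hu]; field_simp
    nlinarith [mul_le_mul_of_nonneg_left hexp (by positivity : (0:ℝ) ≤ 4*p*t)]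
  have step2 : (r^2+t) ^ p ≤ (4*p) ^ p * (t ^ p * Real.exp (r^2/(4*t))) := by
    have h1 : (r^2+t) ^ p ≤ ((4*p) * t * Real.exp u) ^ p :=
      Real.rpow_le_rpow (by positivity) step1 hp0.le
    have h2 : ((4*p) * t * Real.exp u) ^ p
        = (4*p) ^ p * (t ^ p * Real.exp (r^2/(4*t))) := by
      rw [Real.mul_rpow (by positivity) (Real.exp_pos _).le,
        Real.mul_rpow (by positivity) ht.le, ← Real.exp_mul]
      have : u * p = r^2/(4*t) := by rw [hu]; field_simp
      rw [this, mul_assoc]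
    exact h1.trans_eq h2
  have hA : (0:ℝ) < (r^2+t) ^ p := Real.rpow_pos_of_pos (by positivity) p
  have hB : (0:ℝ) < t ^ p * Real.exp (r^2/(4*t)) := by positivity
  have key := inv_le_mul_inv' hA hB step2
  calc t ^ (-p) * Real.exp (-(r^2)/(4*t))
      = (t ^ p * Real.exp (r^2/(4*t)))⁻¹ := by
        rw [Real.rpow_neg ht.le, mul_inv, neg_div, Real.exp_neg]
    _ ≤ (4*p) ^ p * ((r^2+t) ^ p)⁻¹ := key
    _ = (4*p) ^ p * (r^2+t) ^ (-p) := by rw [Real.rpow_neg (by positivity)]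

private lemma int_deriv (r s : ℝ) (hs : 0 < r^2 + s) :
    HasDerivAt (fun s => -(2/3)*(r^2+s) ^ (-(3:ℝ)/2)) ((r^2+s) ^ (-(5:ℝ)/2)) s := by
  have h1 : HasDerivAt (fun s : ℝ => r^2+s) 1 s := (hasDerivAt_id s).const_add _
  have h2 := (Real.hasDerivAt_rpow_const (p := -(3:ℝ)/2) (Or.inl hs.ne')).comp s h1
  have h3 := h2.const_mul (-(2/3) : ℝ)
  refine (h3.congr_of_eventuallyEq (Filter.Eventually.of_forall fun z => rfl)).congr_deriv ?_
  have he : -(3:ℝ)/2 - 1 = -(5:ℝ)/2 := by norm_num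
  simp [Function.comp, he]
  ring

private lemma int_value (r t : ℝ) (ht : 0 < t) :
    IntegrableOn (fun s => (r^2+s) ^ (-(5:ℝ)/2)) (Ioi t) ∧
      ∫ s in Ioi t, (r^2+s) ^ (-(5:ℝ)/2) = (2/3)*(r^2+t) ^ (-(3:ℝ)/2) := by
  have hpos : ∀ s ∈ Ici t, 0 < r^2 + s := fun s hs => by
    have : t ≤ s := mem_Ici.mp hs
    nlinarith [sq_nonneg r]
  have hderiv : ∀ s ∈ Ioi t, HasDerivAt (fun s => -(2/3)*(r^2+s) ^ (-(3:ℝ)/2))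
      ((r^2+s) ^ (-(5:ℝ)/2)) s := fun s hs =>
    int_deriv r s (hpos s (mem_Ici.mpr (mem_Ioi.mp hs).le))
  have hcont : ContinuousWithinAt (fun s => -(2/3)*(r^2+s) ^ (-(3:ℝ)/2)) (Ici t) t :=
    (int_deriv r t (hpos t (mem_Ici.mpr le_rfl))).continuousAt.continuousWithinAt
  have hnonneg : ∀ s ∈ Ioi t, 0 ≤ (r^2+s) ^ (-(5:ℝ)/2) := fun s hs =>
    Real.rpow_nonneg (hpos s (mem_Ici.mpr (mem_Ioi.mp hs).le)).le _
  have htend : Filter.Tendsto (fun s => -(2/3)*(r^2+s) ^ (-(3:ℝ)/2))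
      Filter.atTop (nhds 0) := by
    have h1 : Filter.Tendsto (fun s : ℝ => r^2+s) Filter.atTop Filter.atTop :=
      Filter.tendsto_atTop_add_const_left _ _ Filter.tendsto_id
    have h2 : Filter.Tendsto (fun x : ℝ => x ^ (-(3:ℝ)/2)) Filter.atTop (nhds 0) := by
      have := tendsto_rpow_neg_atTop (y := (3:ℝ)/2) (by norm_num)
      convert this using 2
      norm_num
    have := (h2.comp h1).const_mul (-(2/3) : ℝ)
    simpa using this
  refine ⟨integrableOn_Ioi_deriv_of_nonneg hcont hderiv hnonneg htend, ?_⟩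
  rw [integral_Ioi_of_hasDerivAt_of_nonneg hcont hderiv hnonneg htend]
  ring

private lemma coord_le_norm (x : E3) (i : Fin 3) : |x i| ≤ ‖x‖ := by
  have h := abs_real_inner_le_norm x (EuclideanSpace.single i 1)
  simpa [EuclideanSpace.inner_single_right, EuclideanSpace.norm_single] using h

private lemma pointwise_int_bound (r s : ℝ) (hr : 0 ≤ r) (hs : 0 < s) (a b d : ℝ)
    (ha : |a| ≤ r) (hb : |b| ≤ r) (hd : d = 0 ∨ d = 1) :
    |(4*Real.pi*s) ^ (-(3:ℝ)/2) * (Real.exp (-r^2/(4*s)) * (a*b/(4*s^2) - d/(2*s)))|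
      ≤ ((4*Real.pi) ^ (-(3:ℝ)/2) * 14 ^ ((7:ℝ)/2)) * (r^2+s) ^ (-(5:ℝ)/2) := by
  have hrs : (0:ℝ) < r^2 + s := by positivity
  have hπ : (0:ℝ) < 4*Real.pi := by positivity
  have hA : (4*Real.pi*s) ^ (-(3:ℝ)/2)
      = (4*Real.pi) ^ (-(3:ℝ)/2) * s ^ (-(3:ℝ)/2) :=
    Real.mul_rpow hπ.le hs.le
  have hAnn : (0:ℝ) ≤ (4*Real.pi*s) ^ (-(3:ℝ)/2) :=
    Real.rpow_nonneg (by positivity) _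
  have hd01 : 0 ≤ d ∧ d ≤ 1 := by rcases hd with h | h <;> simp [h]
  have habs : |a*b/(4*s^2) - d/(2*s)| ≤ (r^2+s)/s^2 := by
    have h1 : |a*b/(4*s^2) - d/(2*s)| ≤ |a*b|/(4*s^2) + d/(2*s) := by
      refine (abs_sub _ _).trans ?_
      rw [abs_div, abs_div, abs_of_nonneg hd01.1, abs_of_pos (by positivity : (0:ℝ) < 4*s^2),
        abs_of_pos (by positivity : (0:ℝ) < 2*s)]
    have h2 : |a*b| ≤ r^2 := by
      rw [abs_mul]
      calc |a| * |b| ≤ r * r := mul_le_mul ha hb (abs_nonneg _) hr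
        _ = r^2 := (sq r).symm
    have h3 : r^2/(4*s^2) + 1/(2*s) ≤ (r^2+s)/s^2 := by
      rw [div_add_div _ _ (by positivity : (4*s^2:ℝ) ≠ 0) (by positivity : (2*s:ℝ) ≠ 0),
        div_le_div_iff₀ (by positivity) (by positivity)]
      nlinarith [mul_nonneg (sq_nonneg r) (pow_pos hs 3).le, (pow_pos hs 4).le]
    calc |a*b/(4*s^2) - d/(2*s)| ≤ |a*b|/(4*s^2) + d/(2*s) := h1
      _ ≤ r^2/(4*s^2) + 1/(2*s) := by
          gcongr
          · exact hd01.2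
      _ ≤ (r^2+s)/s^2 := h3
  have hE : (0:ℝ) < Real.exp (-r^2/(4*s)) := Real.exp_pos _
  have step : |(4*Real.pi*s) ^ (-(3:ℝ)/2) *
        (Real.exp (-r^2/(4*s)) * (a*b/(4*s^2) - d/(2*s)))|
      ≤ (4*Real.pi) ^ (-(3:ℝ)/2) * ((r^2+s) *
          (s ^ (-(7:ℝ)/2) * Real.exp (-r^2/(4*s)))) := by
    rw [abs_mul, abs_mul, abs_of_nonneg hAnn, abs_of_pos hE, hA]
    have hmul : (4*Real.pi) ^ (-(3:ℝ)/2) * s ^ (-(3:ℝ)/2) *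
          (Real.exp (-r^2/(4*s)) * |a*b/(4*s^2) - d/(2*s)|)
        ≤ (4*Real.pi) ^ (-(3:ℝ)/2) * s ^ (-(3:ℝ)/2) *
          (Real.exp (-r^2/(4*s)) * ((r^2+s)/s^2)) := by
      gcongr
    refine hmul.trans_eq ?_
    have hpow : s ^ (-(3:ℝ)/2) / s^2 = s ^ (-(7:ℝ)/2) := by
      rw [← Real.rpow_natCast s 2, ← Real.rpow_sub hs]
      norm_num
    field_simp
    rw [← Real.rpow_natCast s 2, ← Real.rpow_add hs]
    norm_num
  refine step.trans ?_
  have hcore := core_bound ((7:ℝ)/2) r s (by norm_num) hs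
  norm_num at hcore
  have hcore' : s ^ (-(7:ℝ)/2) * Real.exp (-r^2/(4*s))
      ≤ 14 ^ ((7:ℝ)/2) * (r^2+s) ^ (-(7:ℝ)/2) := by
    rw [show (-(7:ℝ)/2) = (-(7/2:ℝ)) by norm_num]
    exact hcore
  have h75 : (r^2+s) * (r^2+s) ^ (-(7:ℝ)/2) = (r^2+s) ^ (-(5:ℝ)/2) := by
    rw [← Real.rpow_one_add' hrs.le (by norm_num)]
    norm_num
  calc (4*Real.pi) ^ (-(3:ℝ)/2) * ((r^2+s) *
          (s ^ (-(7:ℝ)/2) * Real.exp (-r^2/(4*s))))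
      ≤ (4*Real.pi) ^ (-(3:ℝ)/2) * ((r^2+s) * (14 ^ ((7:ℝ)/2) * (r^2+s) ^ (-(7:ℝ)/2))) :=
        mul_le_mul_of_nonneg_left (mul_le_mul_of_nonneg_left hcore' hrs.le)
          (Real.rpow_nonneg hπ.le _)
    _ = ((4*Real.pi) ^ (-(3:ℝ)/2) * 14 ^ ((7:ℝ)/2)) * (r^2+s) ^ (-(5:ℝ)/2) := by
        rw [← h75]; ring

end Aux

/-- Pointwise estimate `|E(x,t)| ≤ C (|x|² + t)^{-3/2}` for the Stokes
fundamental solution (the case `j = 0` of `|∇ʲE| ≤ C_j (|x|²+t)^{-(3+j)/2}`). -/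
theorem stokesFundamental_pointwise_bound :
    ∃ C : ℝ, 0 < C ∧ ∀ (x : EuclideanSpace ℝ (Fin 3)) (t : ℝ) (i j : Fin 3),
      0 < t → |stokesFundamental x t i j| ≤ C * (‖x‖^2 + t) ^ (-(3:ℝ)/2) := by
  set C1 : ℝ := (4*Real.pi) ^ (-(3:ℝ)/2) * 6 ^ ((3:ℝ)/2) with hC1
  set CB : ℝ := (4*Real.pi) ^ (-(3:ℝ)/2) * 14 ^ ((7:ℝ)/2) with hCB
  have hπ : (0:ℝ) < 4*Real.pi := by positivity
  have hC1pos : 0 < C1 := by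
    apply mul_pos (Real.rpow_pos_of_pos hπ _) (Real.rpow_pos_of_pos (by norm_num) _)
  have hCBpos : 0 < CB := by
    apply mul_pos (Real.rpow_pos_of_pos hπ _) (Real.rpow_pos_of_pos (by norm_num) _)
  refine ⟨C1 + CB * (2/3), by positivity, ?_⟩
  intro x t i j ht
  set r : ℝ := ‖x‖ with hr
  have hr0 : 0 ≤ r := norm_nonneg x
  have hrt : (0:ℝ) < r^2 + t := by positivity
  have hRnn : (0:ℝ) ≤ (r^2 + t) ^ (-(3:ℝ)/2) := Real.rpow_nonneg hrt.le _
  -- heat kernel part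
  have hheat : |(4 * Real.pi * t) ^ (-(3:ℝ)/2) * Real.exp (-‖x‖^2 / (4*t)) *
      (if i = j then (1:ℝ) else 0)| ≤ C1 * (r^2 + t) ^ (-(3:ℝ)/2) := by
    have hcore := core_bound ((3:ℝ)/2) r t (by norm_num) ht
    norm_num at hcore
    have hAnn : (0:ℝ) ≤ (4*Real.pi*t) ^ (-(3:ℝ)/2) := Real.rpow_nonneg (by positivity) _
    have hA : (4*Real.pi*t) ^ (-(3:ℝ)/2) = (4*Real.pi) ^ (-(3:ℝ)/2) * t ^ (-(3:ℝ)/2) :=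
      Real.mul_rpow hπ.le ht.le
    have hcore' : t ^ (-(3:ℝ)/2) * Real.exp (-‖x‖^2/(4*t))
        ≤ 6 ^ ((3:ℝ)/2) * (r^2+t) ^ (-(3:ℝ)/2) := by
      rw [show (-(3:ℝ)/2) = (-(3/2:ℝ)) by norm_num,
        show -‖x‖^2/(4*t) = -r^2/(4*t) by rw [hr]]
      exact hcore
    have hle : (4 * Real.pi * t) ^ (-(3:ℝ)/2) * Real.exp (-‖x‖^2 / (4*t))
        ≤ C1 * (r^2 + t) ^ (-(3:ℝ)/2) := by
      rw [hA, hC1, mul_assoc, mul_assoc]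
      exact mul_le_mul_of_nonneg_left hcore' (Real.rpow_nonneg hπ.le _)
    rcases eq_or_ne i j with rfl | h
    · rw [if_pos rfl, mul_one]
      rw [abs_of_nonneg (by positivity)]
      exact hle
    · simp only [if_neg h, mul_zero, abs_zero]
      positivity
  -- integral part
  have hint : |∫ s in Set.Ioi t,
      (4 * Real.pi * s) ^ (-(3:ℝ)/2) *
        fderiv ℝ (fun y => fderiv ℝ
            (fun z : EuclideanSpace ℝ (Fin 3) => Real.exp (-‖z‖^2 / (4*s)))
            y (EuclideanSpace.single j 1))
          x (EuclideanSpace.single i 1)|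
      ≤ CB * (2/3) * (r^2 + t) ^ (-(3:ℝ)/2) := by
    have hg_int : IntegrableOn (fun s => CB * (r^2+s) ^ (-(5:ℝ)/2)) (Set.Ioi t) :=
      ((int_value r t ht).1).const_mul CB
    have hae : ∀ᵐ s ∂(volume.restrict (Set.Ioi t)),
        ‖(4 * Real.pi * s) ^ (-(3:ℝ)/2) *
          fderiv ℝ (fun y => fderiv ℝ
              (fun z : EuclideanSpace ℝ (Fin 3) => Real.exp (-‖z‖^2 / (4*s)))
              y (EuclideanSpace.single j 1))
            x (EuclideanSpace.single i 1)‖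
          ≤ CB * (r^2+s) ^ (-(5:ℝ)/2) := by
      rw [ae_restrict_iff' measurableSet_Ioi]
      refine ae_of_all _ fun s hs => ?_
      have hs0 : 0 < s := ht.trans (Set.mem_Ioi.mp hs)
      rw [gauss_second_deriv s hs0.ne' x i j, Real.norm_eq_abs]
      have hxx : -‖x‖^2/(4*s) = -r^2/(4*s) := by rw [hr]
      rw [hxx]
      exact pointwise_int_bound r s hr0 hs0 (x i) (x j) _
        (coord_le_norm x i) (coord_le_norm x j)
        (by rcases eq_or_ne i j with h | h <;> simp [h])
    have hle := norm_integral_le_of_norm_le hg_int hae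
    rw [Real.norm_eq_abs] at hle
    refine hle.trans ?_
    rw [MeasureTheory.integral_const_mul, (int_value r t ht).2]
    exact le_of_eq (by ring)
  calc |stokesFundamental x t i j| ≤
      |(4 * Real.pi * t) ^ (-(3:ℝ)/2) * Real.exp (-‖x‖^2 / (4*t)) *
        (if i = j then (1:ℝ) else 0)| +
      |∫ s in Set.Ioi t,
        (4 * Real.pi * s) ^ (-(3:ℝ)/2) *
          fderiv ℝ (fun y => fderiv ℝ
              (fun z : EuclideanSpace ℝ (Fin 3) => Real.exp (-‖z‖^2 / (4*s)))
              y (EuclideanSpace.single j 1))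
            x (EuclideanSpace.single i 1)| := abs_add_le _ _
    _ ≤ C1 * (r^2 + t) ^ (-(3:ℝ)/2) + CB * (2/3) * (r^2 + t) ^ (-(3:ℝ)/2) :=
        add_le_add hheat hint
    _ = (C1 + CB * (2/3)) * (‖x‖^2 + t) ^ (-(3:ℝ)/2) := by rw [hr]; ring
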